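/- arXiv:math/0407521 — 2 statements merged into one kernel-verified Lean document; each statement's English description precedes it below -/
import Mathlib

section
/- Let P(t, M) ∈ ℤ[t^{±1}, M^{±1}] be a nonzero Laurent polynomial in two variables. Then there exists N such that for all n ≥ N, the breadth of the one-variable Laurent polynomial P(t, t^{−2−2n}) minus the breadth of P(t, t^{2n}) is a constant independent of n. -/
/-- The breadth `d₊ − d₋` of a nonzero Laurent polynomial (junk value `0` for `0`). -/
noncomputable def breadthL (f : LaurentPolynomial ℤ) : ℤ :=
  if h : f.coeff.support.Nonempty then f.coeff.support.max' h - f.coeff.support.min' h else 0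

/-- Substitution `M = t^s` in a two-variable Laurent polynomial
`P = Σ_k a_k(t) M^k ∈ ℤ[t^{±1}, M^{±1}]`, encoded with outer variable `M` and
coefficients in `ℤ[t^{±1}]`: `subM P s = Σ_k a_k(t) t^{s k}`. -/
noncomputable def subM (P : LaurentPolynomial (LaurentPolynomial ℤ)) (s : ℤ) :
    LaurentPolynomial ℤ :=
  P.coeff.sum fun k a => a * LaurentPolynomial.T (s * k)

/- auxiliary degree functions -/
noncomputable def dmax (f : LaurentPolynomial ℤ) : ℤ :=
  if h : f.coeff.support.Nonempty then f.coeff.support.max' h else 0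

noncomputable def dmin (f : LaurentPolynomial ℤ) : ℤ :=
  if h : f.coeff.support.Nonempty then f.coeff.support.min' h else 0

lemma support_nonempty_of_ne {f : LaurentPolynomial ℤ} (hf : f ≠ 0) : f.coeff.support.Nonempty :=
  Finsupp.support_nonempty_iff.mpr (mt AddMonoidAlgebra.coeff_eq_zero.mp hf)

lemma dmax_mem {f : LaurentPolynomial ℤ} (hf : f ≠ 0) : f.coeff (dmax f) ≠ 0 := by
  have h := support_nonempty_of_ne hf
  have : dmax f ∈ f.coeff.support := by rw [dmax, dif_pos h]; exact f.coeff.support.max'_mem h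
  simpa [Finsupp.mem_support_iff] using this

lemma le_dmax {f : LaurentPolynomial ℤ} {c : ℤ} (hc : f.coeff c ≠ 0) : c ≤ dmax f := by
  have h : f.coeff.support.Nonempty := ⟨c, Finsupp.mem_support_iff.mpr hc⟩
  rw [dmax, dif_pos h]
  exact f.coeff.support.le_max' c (Finsupp.mem_support_iff.mpr hc)

lemma dmin_mem {f : LaurentPolynomial ℤ} (hf : f ≠ 0) : f.coeff (dmin f) ≠ 0 := by
  have h := support_nonempty_of_ne hf
  have : dmin f ∈ f.coeff.support := by rw [dmin, dif_pos h]; exact f.coeff.support.min'_mem h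
  simpa [Finsupp.mem_support_iff] using this

lemma dmin_le {f : LaurentPolynomial ℤ} {c : ℤ} (hc : f.coeff c ≠ 0) : dmin f ≤ c := by
  have h : f.coeff.support.Nonempty := ⟨c, Finsupp.mem_support_iff.mpr hc⟩
  rw [dmin, dif_pos h]
  exact f.coeff.support.min'_le c (Finsupp.mem_support_iff.mpr hc)

lemma breadthL_eq {f : LaurentPolynomial ℤ} (hf : f ≠ 0) :
    breadthL f = dmax f - dmin f := by
  have h := support_nonempty_of_ne hf
  rw [breadthL, dif_pos h, dmax, dif_pos h, dmin, dif_pos h]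

lemma subM_apply (P : LaurentPolynomial (LaurentPolynomial ℤ)) (s c : ℤ) :
    (subM P s).coeff c = ∑ k ∈ P.coeff.support, (P.coeff k).coeff (c - s * k) := by
  rw [subM, Finsupp.sum, AddMonoidAlgebra.coeff_sum, Finset.sum_apply']
  refine Finset.sum_congr rfl fun k _ => ?_
  rw [LaurentPolynomial.T, AddMonoidAlgebra.coeff_mul_single_apply, mul_one, sub_eq_add_neg]

lemma dmax_eq {f : LaurentPolynomial ℤ} {c : ℤ} (hc : f.coeff c ≠ 0)
    (h : ∀ d, f.coeff d ≠ 0 → d ≤ c) : dmax f = c := by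
  have hf : f ≠ 0 := fun h0 => hc (by simp [h0])
  exact le_antisymm (h _ (dmax_mem hf)) (le_dmax hc)

lemma dmin_eq {f : LaurentPolynomial ℤ} {c : ℤ} (hc : f.coeff c ≠ 0)
    (h : ∀ d, f.coeff d ≠ 0 → c ≤ d) : dmin f = c := by
  have hf : f ≠ 0 := fun h0 => hc (by simp [h0])
  exact le_antisymm (dmin_le hc) (h _ (dmin_mem hf))

/-- Key lemma for the top degree of `subM P s`. -/
lemma subM_top (P : LaurentPolynomial (LaurentPolynomial ℤ)) (s k₀ : ℤ)
    (hk₀ : k₀ ∈ P.coeff.support)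
    (h : ∀ k ∈ P.coeff.support, k ≠ k₀ → dmax (P.coeff k) + s * k < dmax (P.coeff k₀) + s * k₀) :
    (subM P s).coeff (dmax (P.coeff k₀) + s * k₀) ≠ 0 ∧
      dmax (subM P s) = dmax (P.coeff k₀) + s * k₀ := by
  have hPk₀ : P.coeff k₀ ≠ 0 := Finsupp.mem_support_iff.mp hk₀
  set c := dmax (P.coeff k₀) + s * k₀ with hc
  have hcoeff : (subM P s).coeff c ≠ 0 := by
    rw [subM_apply]
    rw [Finset.sum_eq_single k₀]
    · simpa [hc] using dmax_mem hPk₀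
    · intro k hk hne
      by_contra hne0
      have := le_dmax hne0
      have := h k hk hne
      omega
    · intro h'; exact absurd hk₀ h'
  refine ⟨hcoeff, dmax_eq hcoeff ?_⟩
  intro d hd
  rw [subM_apply] at hd
  obtain ⟨k, hk, hne0⟩ := Finset.exists_ne_zero_of_sum_ne_zero hd
  have hle := le_dmax hne0
  by_cases hkk : k = k₀
  · subst hkk; omega
  · have := h k hk hkk; omega

/-- Key lemma for the bottom degree of `subM P s`. -/
lemma subM_bot (P : LaurentPolynomial (LaurentPolynomial ℤ)) (s k₀ : ℤ)
    (hk₀ : k₀ ∈ P.coeff.support)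
    (h : ∀ k ∈ P.coeff.support, k ≠ k₀ → dmin (P.coeff k₀) + s * k₀ < dmin (P.coeff k) + s * k) :
    dmin (subM P s) = dmin (P.coeff k₀) + s * k₀ := by
  have hPk₀ : P.coeff k₀ ≠ 0 := Finsupp.mem_support_iff.mp hk₀
  set c := dmin (P.coeff k₀) + s * k₀ with hc
  have hcoeff : (subM P s).coeff c ≠ 0 := by
    rw [subM_apply]
    rw [Finset.sum_eq_single k₀]
    · simpa [hc] using dmin_mem hPk₀
    · intro k hk hne
      by_contra hne0
      have := dmin_le hne0
      have := h k hk hne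
      omega
    · intro h'; exact absurd hk₀ h'
  refine dmin_eq hcoeff ?_
  intro d hd
  rw [subM_apply] at hd
  obtain ⟨k, hk, hne0⟩ := Finset.exists_ne_zero_of_sum_ne_zero hd
  have hle := dmin_le hne0
  by_cases hkk : k = k₀
  · subst hkk; omega
  · have := h k hk hkk; omega

/-- For a nonzero `P(t, M) ∈ ℤ[t^{±1}, M^{±1}]`, the difference of breadths
`breadth(P(t, t^{−2−2n})) − breadth(P(t, t^{2n}))` is eventually a constant
independent of `n` (and both substituted polynomials are eventually nonzero). -/
theorem breadth_difference_eventually_constant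
    (P : LaurentPolynomial (LaurentPolynomial ℤ)) (hP : P ≠ 0) :
    ∃ (c : ℤ) (N : ℕ), ∀ n : ℕ, N ≤ n →
      subM P (-2 - 2 * (n : ℤ)) ≠ 0 ∧ subM P (2 * (n : ℤ)) ≠ 0 ∧
      breadthL (subM P (-2 - 2 * (n : ℤ))) - breadthL (subM P (2 * (n : ℤ))) = c := by
  have hK : P.coeff.support.Nonempty := Finsupp.support_nonempty_iff.mpr (mt AddMonoidAlgebra.coeff_eq_zero.mp hP)
  set kx := P.coeff.support.max' hK with hkxdef
  set kn := P.coeff.support.min' hK with hkndef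
  have hkx : kx ∈ P.coeff.support := P.coeff.support.max'_mem hK
  have hkn : kn ∈ P.coeff.support := P.coeff.support.min'_mem hK
  set A : ℤ := P.coeff.support.sup' hK (fun k => dmax (P.coeff k)) with hA
  set a : ℤ := P.coeff.support.inf' hK (fun k => dmin (P.coeff k)) with ha
  -- bounds
  have hbound : ∀ k ∈ P.coeff.support, a ≤ dmin (P.coeff k) ∧ dmin (P.coeff k) ≤ dmax (P.coeff k) ∧ dmax (P.coeff k) ≤ A := by
    intro k hk
    have hPk : P.coeff k ≠ 0 := Finsupp.mem_support_iff.mp hk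
    refine ⟨?_, dmin_le (dmax_mem hPk), ?_⟩
    · rw [ha]; exact Finset.inf'_le (fun k => dmin (P.coeff k)) hk
    · rw [hA]; exact Finset.le_sup' (fun k => dmax (P.coeff k)) hk
  set N : ℕ := (A - a).toNat + 1 with hN
  refine ⟨dmax (P.coeff kn) - dmin (P.coeff kx) - (dmax (P.coeff kx) - dmin (P.coeff kn)) + 2 * (kx - kn), N, ?_⟩
  intro n hn
  have hsle : (A - a) + 1 ≤ 2 * (n : ℤ) := by
    have h1 : A - a ≤ ((A - a).toNat : ℤ) := Int.self_le_toNat _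
    have h2 : (N : ℤ) ≤ (n : ℤ) := by exact_mod_cast hn
    omega
  -- positive substitution s₂ = 2n
  have htop2 : ∀ k ∈ P.coeff.support, k ≠ kx →
      dmax (P.coeff k) + 2 * (n : ℤ) * k < dmax (P.coeff kx) + 2 * (n : ℤ) * kx := by
    intro k hk hne
    have hklt : k < kx := lt_of_le_of_ne (P.coeff.support.le_max' k hk) hne
    have hb1 := hbound k hk
    have hb2 := hbound kx hkx
    nlinarith [hb1.1, hb1.2.1, hb1.2.2, hb2.1, hb2.2.1, hb2.2.2]
  have hbot2 : ∀ k ∈ P.coeff.support, k ≠ kn →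
      dmin (P.coeff kn) + 2 * (n : ℤ) * kn < dmin (P.coeff k) + 2 * (n : ℤ) * k := by
    intro k hk hne
    have hklt : kn < k := lt_of_le_of_ne (P.coeff.support.min'_le k hk) (Ne.symm hne)
    have hb1 := hbound k hk
    have hb2 := hbound kn hkn
    nlinarith [hb1.1, hb1.2.1, hb1.2.2, hb2.1, hb2.2.1, hb2.2.2]
  -- negative substitution s₁ = -2 - 2n
  have htop1 : ∀ k ∈ P.coeff.support, k ≠ kn →
      dmax (P.coeff k) + (-2 - 2 * (n : ℤ)) * k < dmax (P.coeff kn) + (-2 - 2 * (n : ℤ)) * kn := by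
    intro k hk hne
    have hklt : kn < k := lt_of_le_of_ne (P.coeff.support.min'_le k hk) (Ne.symm hne)
    have hb1 := hbound k hk
    have hb2 := hbound kn hkn
    nlinarith [hb1.1, hb1.2.1, hb1.2.2, hb2.1, hb2.2.1, hb2.2.2]
  have hbot1 : ∀ k ∈ P.coeff.support, k ≠ kx →
      dmin (P.coeff kx) + (-2 - 2 * (n : ℤ)) * kx < dmin (P.coeff k) + (-2 - 2 * (n : ℤ)) * k := by
    intro k hk hne
    have hklt : k < kx := lt_of_le_of_ne (P.coeff.support.le_max' k hk) hne
    have hb1 := hbound k hk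
    have hb2 := hbound kx hkx
    nlinarith [hb1.1, hb1.2.1, hb1.2.2, hb2.1, hb2.2.1, hb2.2.2]
  obtain ⟨hne2c, hmax2⟩ := subM_top P (2 * (n : ℤ)) kx hkx htop2
  have hmin2 := subM_bot P (2 * (n : ℤ)) kn hkn hbot2
  obtain ⟨hne1c, hmax1⟩ := subM_top P (-2 - 2 * (n : ℤ)) kn hkn htop1
  have hmin1 := subM_bot P (-2 - 2 * (n : ℤ)) kx hkx hbot1
  have hne1 : subM P (-2 - 2 * (n : ℤ)) ≠ 0 := fun h0 => hne1c (by simp [h0])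
  have hne2 : subM P (2 * (n : ℤ)) ≠ 0 := fun h0 => hne2c (by simp [h0])
  refine ⟨hne1, hne2, ?_⟩
  rw [breadthL_eq hne1, breadthL_eq hne2, hmax1, hmin1, hmax2, hmin2]
  ring
end

section
/- Let g(t,M), γ(t,M,L), α(t,M,L), β(t,M,L) be elements with integer Laurent-polynomial coefficients satisfying g·β = γ·α in the quantum torus over ℤ[t^{±1}], where the coefficients of powers of L in α are coprime as elements of ℤ[t^{±1},M]. If t+1 divides g but not γ, then t+1 divides all coefficients of α, contradicting coprimality; hence g and γ can be chosen so that g(−1,M) ≠ 0. -/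
/-- Coefficient ring `ℤ[t^{±1}][M^{±1}]` of the quantum torus (outer variable `M`). -/
noncomputable abbrev CMt : Type := LaurentPolynomial (LaurentPolynomial ℤ)

/-- The automorphism power `σ^j` of `ℤ[t^{±1}][M^{±1}]` induced by conjugation by
`L^j` in the quantum torus: it multiplies the coefficient of `M^k` by `t^{2jk}`. -/
noncomputable def sigmaPow (j : ℤ) (c : CMt) : CMt :=
  Finsupp.sum (AddMonoidAlgebra.coeff c) fun k a =>
    AddMonoidAlgebra.ofCoeff
      (Finsupp.single k (LaurentPolynomial.T (2 * j * k) * a) : ℤ →₀ LaurentPolynomial ℤ)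

/-- Multiplication in the quantum torus `ℤ[t^{±1}]⟨L^{±1}, M^{±1}⟩/(LM = t²ML)`,
with elements encoded as finitely supported functions `ℤ →₀ ℤ[t^{±1}][M^{±1}]`
recording the coefficient of each power of `L`. -/
noncomputable def qMul (f g : ℤ →₀ CMt) : ℤ →₀ CMt :=
  f.sum fun i a => g.sum fun j b => Finsupp.single (i + j) (a * sigmaPow i b)

/-- `t + 1` as an element of `ℤ[t^{±1}][M^{±1}]`. -/
noncomputable def tPlusOne : CMt :=
  LaurentPolynomial.C (LaurentPolynomial.T 1 + 1)

open LaurentPolynomial Polynomial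

/-- Evaluation of `ℤ[t^{±1}]` at `t = -1`. -/
noncomputable def eps : LaurentPolynomial ℤ →+* ℤ :=
  AddMonoidAlgebra.liftNCRingHom (RingHom.id ℤ)
    ((Units.coeHom ℤ).comp (zpowersHom ℤˣ (-1))) (fun _ _ => Commute.all _ _)

lemma eps_single (n : ℤ) (a : ℤ) :
    eps (AddMonoidAlgebra.single n a) = a * (((-1 : ℤˣ) ^ n : ℤˣ) : ℤ) := by
  show AddMonoidAlgebra.liftNC _ _ (AddMonoidAlgebra.single n a) = _
  rw [AddMonoidAlgebra.liftNC_single]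
  simp only [MonoidHom.comp_apply, zpowersHom_apply, toAdd_ofAdd,
    Units.coeHom_apply, AddMonoidHom.coe_coe, RingHom.id_apply]

lemma eps_T (n : ℤ) : eps (T n) = (((-1 : ℤˣ) ^ n : ℤˣ) : ℤ) := by
  rw [T, eps_single, one_mul]

lemma eps_T_one : eps (T 1) = -1 := by
  rw [eps_T]; simp

lemma eps_comp_toLaurent : eps.comp Polynomial.toLaurent = Polynomial.evalRingHom (-1 : ℤ) := by
  apply Polynomial.ringHom_ext'
  · ext a
    simp [Polynomial.toLaurent_C, eps_single, LaurentPolynomial.C]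
  · simp [Polynomial.toLaurent_X, eps_T_one]

lemma eps_toLaurent (q : ℤ[X]) : eps (Polynomial.toLaurent q) = q.eval (-1) := by
  have := congrArg (fun f => f q) eps_comp_toLaurent
  simpa using this

lemma dvd_iff_eps (p : LaurentPolynomial ℤ) :
    (T 1 + 1 : LaurentPolynomial ℤ) ∣ p ↔ eps p = 0 := by
  constructor
  · rintro ⟨d, rfl⟩
    rw [map_mul, map_add, eps_T_one, map_one]
    ring
  · intro h
    obtain ⟨n, q, hq⟩ := p.exists_T_pow
    have hq' : q.eval (-1) = 0 := by
      rw [← eps_toLaurent, hq, map_mul, h, zero_mul]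
    have hdvd : (X - Polynomial.C (-1 : ℤ)) ∣ q := Polynomial.dvd_iff_isRoot.mpr hq'
    have hX : (X - Polynomial.C (-1 : ℤ)) = X + 1 := by
      simp [sub_neg_eq_add]
    rw [hX] at hdvd
    have h2 : (T 1 + 1 : LaurentPolynomial ℤ) ∣ Polynomial.toLaurent q := by
      have := map_dvd Polynomial.toLaurent hdvd
      simpa [Polynomial.toLaurent_X] using this
    rw [hq] at h2
    have hp : p = (p * T (n : ℤ)) * T (-(n : ℤ)) := by
      rw [mul_assoc, ← T_add, add_neg_cancel, T_zero, mul_one]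
    rw [hp]
    exact h2.mul_right _

/-- Reduction `ℤ[t^{±1}][M^{±1}] → ℤ[M^{±1}]` at `t = -1`. -/
noncomputable def phi : CMt →+* LaurentPolynomial ℤ :=
  AddMonoidAlgebra.liftNCRingHom ((LaurentPolynomial.C).comp eps)
    (AddMonoidAlgebra.of ℤ ℤ) (fun _ _ => Commute.all _ _)

lemma phi_single (k : ℤ) (a : LaurentPolynomial ℤ) :
    phi (AddMonoidAlgebra.single k a) = AddMonoidAlgebra.single k (eps a) := by
  show AddMonoidAlgebra.liftNC _ _ (AddMonoidAlgebra.single k a) = _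
  rw [AddMonoidAlgebra.liftNC_single, AddMonoidAlgebra.of_apply, single_eq_C_mul_T]
  rw [map_one, one_mul, single_eq_C_mul_T]; rfl

lemma sum_single_apply' {M N : Type*} [AddCommMonoid M] [AddCommMonoid N]
    (f : ℤ →₀ M) (h : ℤ → M → N) (h0 : ∀ i, h i 0 = 0) (k : ℤ) :
    (f.sum fun i a => Finsupp.single i (h i a)) k = h k (f k) := by
  rw [Finsupp.sum_apply]
  simp only [Finsupp.single_apply]
  rw [Finsupp.sum_ite_eq' f k (fun i a => h i a)]
  by_cases hk : k ∈ f.support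
  · rw [if_pos hk]
  · rw [if_neg hk, Finsupp.notMem_support_iff.mp hk, h0]

lemma phi_eq_sum (c : CMt) : phi c = c.coeff.sum fun k a => AddMonoidAlgebra.single k (eps a) := by
  conv_lhs => rw [← AddMonoidAlgebra.sum_coeff_single c]
  rw [map_finsuppSum]
  simp only [phi_single]

lemma phi_apply (c : CMt) (k : ℤ) : (phi c).coeff k = eps (c.coeff k) := by
  rw [phi_eq_sum, AddMonoidAlgebra.coeff_finsuppSum]
  simp only [AddMonoidAlgebra.coeff_single]
  rw [sum_single_apply' c.coeff (fun _ a => eps a) (fun _ => map_zero eps)]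

lemma C_eq_single (r : LaurentPolynomial ℤ) :
    (LaurentPolynomial.C r : CMt) = AddMonoidAlgebra.single 0 r := rfl

lemma phi_tPlusOne : phi tPlusOne = 0 := by
  rw [tPlusOne, C_eq_single, phi_single]
  rw [map_add, eps_T_one, map_one]
  simp

lemma dvd_iff_phi (c : CMt) : tPlusOne ∣ c ↔ phi c = 0 := by
  constructor
  · rintro ⟨d, rfl⟩
    rw [map_mul, phi_tPlusOne, zero_mul]
  · intro h
    have hk : ∀ k : ℤ, (T 1 + 1 : LaurentPolynomial ℤ) ∣ c.coeff k := by
      intro k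
      rw [dvd_iff_eps, ← phi_apply, h]
      rfl
    classical
    set d : LaurentPolynomial ℤ → LaurentPolynomial ℤ := fun p =>
      if hp : (T 1 + 1 : LaurentPolynomial ℤ) ∣ p ∧ p ≠ 0 then hp.1.choose else 0 with hd
    have hd0 : d 0 = 0 := by
      rw [hd]; simp
    refine ⟨AddMonoidAlgebra.ofCoeff (Finsupp.mapRange d hd0 c.coeff), ?_⟩
    refine AddMonoidAlgebra.coeff_injective (Finsupp.ext ?_)
    intro k
    rw [tPlusOne, C_eq_single, AddMonoidAlgebra.coeff_single_zero_mul,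
        AddMonoidAlgebra.coeff_ofCoeff, Finsupp.mapRange_apply]
    by_cases h0 : c.coeff k = 0
    · rw [h0, hd0, mul_zero]
    · have hdc : d (c.coeff k) = (hk k).choose := dif_pos ⟨hk k, h0⟩
      rw [hdc]
      exact (hk k).choose_spec

/-- The additive reduction map from the quantum torus to the commutative Laurent
polynomial ring `ℤ[M^{±1}][L^{±1}]`, setting `t = -1` in every coefficient. -/
noncomputable def Fhom : (ℤ →₀ CMt) →+ LaurentPolynomial (LaurentPolynomial ℤ) :=
  Finsupp.liftAddHom fun i =>
    ((AddMonoidAlgebra.singleAddHom i :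
        LaurentPolynomial ℤ →+ LaurentPolynomial (LaurentPolynomial ℤ)).comp
      phi.toAddMonoidHom)

lemma Fhom_single (i : ℤ) (a : CMt) :
    Fhom (Finsupp.single i a) = AddMonoidAlgebra.single i (phi a) := by
  rw [Fhom, Finsupp.liftAddHom_apply_single]
  rfl

lemma Fhom_eq_sum (f : ℤ →₀ CMt) :
    Fhom f = f.sum fun i a =>
      (AddMonoidAlgebra.single i (phi a) : LaurentPolynomial (LaurentPolynomial ℤ)) := by
  conv_lhs => rw [← Finsupp.sum_single f]
  rw [map_finsuppSum]
  simp only [Fhom_single]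

lemma Fhom_apply (f : ℤ →₀ CMt) (k : ℤ) : (Fhom f).coeff k = phi (f k) := by
  rw [Fhom_eq_sum, AddMonoidAlgebra.coeff_finsuppSum]
  simp only [AddMonoidAlgebra.coeff_single]
  rw [sum_single_apply' f (fun _ a => phi a) (fun _ => map_zero phi)]

lemma eps_T_even (i k : ℤ) : eps (T (2 * i * k)) = 1 := by
  rw [eps_T, mul_assoc, zpow_mul]
  rw [show ((2:ℤ)) = ((2:ℕ):ℤ) from rfl, zpow_natCast, Int.units_sq, one_zpow]
  rfl

lemma phi_sigmaPow (i : ℤ) (b : CMt) : phi (sigmaPow i b) = phi b := by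
  rw [sigmaPow, map_finsuppSum, phi_eq_sum]
  apply Finsupp.sum_congr
  intro k _
  rw [AddMonoidAlgebra.ofCoeff_single, phi_single, map_mul, eps_T_even, one_mul]

lemma Fhom_qMul (f g : ℤ →₀ CMt) : Fhom (qMul f g) = Fhom f * Fhom g := by
  rw [qMul, map_finsuppSum, Fhom_eq_sum f, Fhom_eq_sum g, Finsupp.sum_mul]
  apply Finsupp.sum_congr
  intro i _
  rw [map_finsuppSum, Finsupp.mul_sum]
  apply Finsupp.sum_congr
  intro j _
  rw [Fhom_single, map_mul, phi_sigmaPow]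
  exact (AddMonoidAlgebra.single_mul_single ..).symm

/-- If `g β = γ α` holds in the quantum torus over `ℤ[t^{±1}]` (with `g = g(t,M)`
containing no `L`), and `t + 1` divides `g` but does not divide all coefficients of
`γ`, then `t + 1` divides all coefficients of `α` — contradicting the coprimality of
the coefficients of `α`; hence in the relation `g β = γ α` one can choose `g, γ`
with `g(−1, M) ≠ 0`. -/
theorem tPlusOne_dvd_alpha
    (g : CMt) (γ α β : ℤ →₀ CMt)
    (hrel : qMul (Finsupp.single 0 g) β = qMul γ α)
    (hg : tPlusOne ∣ g)
    (hγ : ¬ ∀ i : ℤ, tPlusOne ∣ γ i) :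
    ∀ i : ℤ, tPlusOne ∣ α i := by
  push_neg at hγ
  obtain ⟨i₀, hi₀⟩ := hγ
  have h1 : Fhom (qMul (Finsupp.single 0 g) β) = Fhom (qMul γ α) := by rw [hrel]
  rw [Fhom_qMul, Fhom_qMul, Fhom_single] at h1
  have hg0 : phi g = 0 := (dvd_iff_phi g).mp hg
  rw [hg0, AddMonoidAlgebra.single_zero] at h1
  have h2 : Fhom γ * Fhom α = 0 := by
    rw [← h1]
    exact zero_mul _
  have hγne : Fhom γ ≠ 0 := by
    intro hz
    apply hi₀
    rw [dvd_iff_phi, ← Fhom_apply, hz]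
    rfl
  have hα : Fhom α = 0 := by
    rcases mul_eq_zero.mp h2 with h | h
    · exact absurd h hγne
    · exact h
  intro i
  rw [dvd_iff_phi, ← Fhom_apply, hα]
  rfl
end
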